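/- Suppose f : ℝⁿ → ℝ is continuously differentiable and λ-strongly convex with L-Lipschitz gradient (0 < λ, L), μ > 0, φ(x) = f(x) + μ‖x‖₁, and x⋆ is a global minimizer of φ. If x, x⁺ ∈ ℝⁿ satisfy φ(x⁺) ≤ Γ(x), then φ(x⁺) − φ(x⋆) ≤ (1 − λ/L)(φ(x) − φ(x⋆)). -/

import Mathlib

open scoped InnerProductSpace
open Filter Set Topology

lemma key_sc {n : ℕ} (f : EuclideanSpace ℝ (Fin n) → ℝ) (lam : ℝ)
    (hf : ContDiff ℝ 1 f)
    (hsc : ∀ x y : EuclideanSpace ℝ (Fin n), ∀ t ∈ Set.Icc (0:ℝ) 1,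
      f (t • x + (1 - t) • y)
        ≤ t * f x + (1 - t) * f y - lam / 2 * t * (1 - t) * ‖x - y‖ ^ 2)
    (x v : EuclideanSpace ℝ (Fin n)) :
    f x + ⟪gradient f x, v⟫_ℝ + lam / 2 * ‖v‖ ^ 2 ≤ f (x + v) := by
  set g : ℝ → ℝ := fun t => f (x + t • v) with hg
  have hdiff : DifferentiableAt ℝ f x := (hf.differentiable one_ne_zero).differentiableAt
  have hgrad := hdiff.hasGradientAt.hasFDerivAt
  have hcurve : HasDerivAt (fun t : ℝ => x + t • v) v 0 := by
    simpa using ((hasDerivAt_id (0:ℝ)).smul_const v).const_add x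
  have hgd : HasDerivAt g (⟪gradient f x, v⟫_ℝ) 0 := by
    have := HasFDerivAt.comp_hasDerivAt (0:ℝ) (by simpa using hgrad) hcurve
    simp [InnerProductSpace.toDual_apply_apply] at this ⊢
    exact this
  have hslope : Tendsto (slope g 0) (𝓝[>] (0:ℝ)) (𝓝 (⟪gradient f x, v⟫_ℝ)) :=
    (hasDerivAt_iff_tendsto_slope.mp hgd).mono_left
      (nhdsWithin_mono 0 (fun t ht => ne_of_gt ht))
  have hrhs : Tendsto (fun t : ℝ => f (x + v) - f x - lam / 2 * (1 - t) * ‖v‖ ^ 2)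
      (𝓝[>] (0:ℝ)) (𝓝 (f (x + v) - f x - lam / 2 * (1 - 0) * ‖v‖ ^ 2)) := by
    apply Tendsto.mono_left _ nhdsWithin_le_nhds
    exact (Continuous.tendsto (by continuity) 0)
  have hbound : ∀ᶠ t in 𝓝[>] (0:ℝ),
      slope g 0 t ≤ f (x + v) - f x - lam / 2 * (1 - t) * ‖v‖ ^ 2 := by
    filter_upwards [Ioc_mem_nhdsGT_of_mem (Set.left_mem_Ico.mpr one_pos)] with t ht
    have hsct := hsc (x + v) x t ⟨le_of_lt ht.1, ht.2⟩
    have heq : t • (x + v) + (1 - t) • x = x + t • v := by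
      module
    have hnrm : ‖x + v - x‖ = ‖v‖ := by simp
    rw [heq, hnrm] at hsct
    have hg0 : g 0 = f x := by simp [hg]
    rw [slope_def_field, hg0, sub_zero, div_le_iff₀ ht.1]
    have : g t = f (x + t • v) := rfl
    nlinarith [hsct]
  have := le_of_tendsto_of_tendsto hslope hrhs hbound
  simp only [sub_zero, mul_one] at this
  linarith

theorem stmt_1 {n : ℕ} (hn : 0 < n)
    (f : EuclideanSpace ℝ (Fin n) → ℝ)
    (lam L mu : ℝ) (hlam : 0 < lam) (hL : 0 < L) (hmu : 0 < mu)
    (hf : ContDiff ℝ 1 f)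
    (hsc : ∀ x y : EuclideanSpace ℝ (Fin n), ∀ t ∈ Set.Icc (0:ℝ) 1,
      f (t • x + (1 - t) • y)
        ≤ t * f x + (1 - t) * f y - lam / 2 * t * (1 - t) * ‖x - y‖ ^ 2)
    (hlip : ∀ x y : EuclideanSpace ℝ (Fin n),
      ‖gradient f x - gradient f y‖ ≤ L * ‖x - y‖)
    (φ : EuclideanSpace ℝ (Fin n) → ℝ)
    (hφ : ∀ x, φ x = f x + mu * ∑ i, |x i|)
    (Γ : EuclideanSpace ℝ (Fin n) → ℝ)
    (hΓ : ∀ x, Γ x = ⨅ y : EuclideanSpace ℝ (Fin n),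
      (f x + ⟪gradient f x, y - x⟫_ℝ + L / 2 * ‖y - x‖ ^ 2 + mu * ∑ i, |y i|))
    (xstar : EuclideanSpace ℝ (Fin n)) (hmin : ∀ y, φ xstar ≤ φ y)
    (x xplus : EuclideanSpace ℝ (Fin n)) (hstep : φ xplus ≤ Γ x) :
    φ xplus - φ xstar ≤ (1 - lam / L) * (φ x - φ xstar) := by
  have key := key_sc f lam hf hsc
  -- lam ≤ L
  have hlamL : lam ≤ L := by
    haveI : NeZero n := ⟨hn.ne'⟩
    set e : EuclideanSpace ℝ (Fin n) := EuclideanSpace.single ⟨0, hn⟩ (1:ℝ) with he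
    have hne : ‖e‖ = 1 := by simp [he, EuclideanSpace.norm_single]
    have h1 := key 0 e
    have h2 := key e (-e)
    simp only [zero_add, add_neg_cancel] at h1 h2
    have hip : ⟪gradient f e, -e⟫_ℝ = - ⟪gradient f e, e⟫_ℝ := by
      simp [inner_neg_right]
    have hni : ‖(-e : EuclideanSpace ℝ (Fin n))‖ = 1 := by simp [hne]
    rw [hip, hni] at h2
    have hcs : ⟪gradient f e - gradient f 0, e⟫_ℝ ≤ ‖gradient f e - gradient f 0‖ * ‖e‖ :=
      real_inner_le_norm _ _
    have hl := hlip e 0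
    have hsub : ⟪gradient f e - gradient f 0, e⟫_ℝ
        = ⟪gradient f e, e⟫_ℝ - ⟪gradient f 0, e⟫_ℝ := by
      simp [inner_sub_left]
    rw [hne] at h1
    simp only [sub_zero] at hl
    rw [hne] at hl hcs
    nlinarith [h1, h2, hcs, hl, hsub]
  obtain ⟨t, ht⟩ : ∃ t : ℝ, t = lam / L := ⟨_, rfl⟩
  have ht0 : 0 ≤ t := by rw [ht]; positivity
  have ht1 : t ≤ 1 := by rw [ht]; exact (div_le_one hL).mpr hlamL
  obtain ⟨y, hy⟩ : ∃ y : EuclideanSpace ℝ (Fin n), y = t • xstar + (1 - t) • x := ⟨_, rfl⟩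
  -- Γ x ≤ value at y
  have hΓle : Γ x ≤ f x + ⟪gradient f x, y - x⟫_ℝ + L / 2 * ‖y - x‖ ^ 2
      + mu * ∑ i, |y i| := by
    rw [hΓ]
    apply ciInf_le
    refine ⟨f x - ‖gradient f x‖ ^ 2 / (2 * L), ?_⟩
    rintro _ ⟨z, rfl⟩
    dsimp only
    have hip : -(‖gradient f x‖ * ‖z - x‖) ≤ ⟪gradient f x, z - x⟫_ℝ :=
      neg_le_of_abs_le (abs_real_inner_le_norm _ _)
    have hsum : (0:ℝ) ≤ mu * ∑ i, |z i| :=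
      mul_nonneg hmu.le (Finset.sum_nonneg fun i _ => abs_nonneg _)
    have hq : 0 ≤ (L * ‖z - x‖ - ‖gradient f x‖) ^ 2 / (2 * L) := by positivity
    have hring : (L * ‖z - x‖ - ‖gradient f x‖) ^ 2 / (2 * L)
        = L / 2 * ‖z - x‖ ^ 2 - ‖gradient f x‖ * ‖z - x‖ + ‖gradient f x‖ ^ 2 / (2 * L) := by
      field_simp
      ring
    linarith [hip, hsum, hq, hring.le, hring.ge]
  -- first order strong convexity at x towards y
  have hfo := key x (y - x)
  rw [add_sub_cancel] at hfo
  -- strong convexity value form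
  have hsv := hsc xstar x t ⟨ht0, ht1⟩
  -- l1 convexity
  have hl1 : ∑ i, |y i| ≤ t * ∑ i, |xstar i| + (1 - t) * ∑ i, |x i| := by
    rw [Finset.mul_sum, Finset.mul_sum, ← Finset.sum_add_distrib]
    apply Finset.sum_le_sum
    intro i _
    have : y i = t * xstar i + (1 - t) * x i := by
      simp [hy, PiLp.add_apply, PiLp.smul_apply, smul_eq_mul]
    rw [this]
    calc |t * xstar i + (1 - t) * x i| ≤ |t * xstar i| + |(1 - t) * x i| := abs_add_le _ _
      _ = t * |xstar i| + (1 - t) * |x i| := by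
          rw [abs_mul, abs_mul, abs_of_nonneg ht0, abs_of_nonneg (by linarith : (0:ℝ) ≤ 1 - t)]
  -- norm relation
  have hnrm : ‖y - x‖ = t * ‖xstar - x‖ := by
    have : y - x = t • (xstar - x) := by rw [hy]; module
    rw [this, norm_smul, Real.norm_eq_abs, abs_of_nonneg ht0]
  have hkey : φ xplus ≤ t * φ xstar + (1 - t) * φ x := by
    have h1 : φ xplus ≤ f x + ⟪gradient f x, y - x⟫_ℝ + L / 2 * ‖y - x‖ ^ 2
        + mu * ∑ i, |y i| := le_trans hstep hΓle
    have h2 : f x + ⟪gradient f x, y - x⟫_ℝ ≤ f y - lam / 2 * ‖y - x‖ ^ 2 := by linarith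
    have hyx2 : ‖y - x‖ ^ 2 = t ^ 2 * ‖xstar - x‖ ^ 2 := by rw [hnrm]; ring
    have htL : L * t = lam := by rw [ht]; field_simp
    have hmul : mu * ∑ i, |y i| ≤ mu * (t * ∑ i, |xstar i| + (1 - t) * ∑ i, |x i|) :=
      mul_le_mul_of_nonneg_left hl1 hmu.le
    have hcoef : L / 2 * ‖y - x‖ ^ 2 - lam / 2 * ‖y - x‖ ^ 2
        - lam / 2 * t * (1 - t) * ‖xstar - x‖ ^ 2 = 0 := by
      rw [hyx2]
      linear_combination (‖xstar - x‖ ^ 2 * t / 2) * htL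
    rw [← hy] at hsv
    have e1 : t * φ xstar + (1 - t) * φ x
        = t * f xstar + (1 - t) * f x
          + mu * (t * ∑ i, |xstar i| + (1 - t) * ∑ i, |x i|) := by
      rw [hφ, hφ]; ring
    rw [e1]
    linarith [h1, h2, hsv, hmul, hcoef]
  have hexp : (1 - t) * (φ x - φ xstar) = t * φ xstar + (1 - t) * φ x - φ xstar := by ring
  rw [← ht]
  linarith [hkey, hexp.le, hexp.ge]
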